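/- Let s be the unilateral shift on ℓ²(ℕ) with standard basis (ξⱼ)_{j≥0} (sξⱼ = ξ_{j+1}), and let u be a polynomial with u(0) ≠ 0. Set x = (1+s)u(s*) and ψ_x(z) = Σ_{n≥1} ⟨xⁿξ₀, ξ₀⟩ zⁿ (a convergent power series near 0). Then ψ_x(z/((1+z)u(z))) = z for all sufficiently small |z|. -/

import Mathlib

open scoped InnerProductSpace

section Aux
variable {H : Type*} [NormedAddCommGroup H] [InnerProductSpace ℂ H] [CompleteSpace H]

lemma hb_ext (ξ : HilbertBasis ℕ ℂ H) {a b : H}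
    (h : ∀ i, ⟪ξ i, a⟫_ℂ = ⟪ξ i, b⟫_ℂ) : a = b := by
  apply ξ.repr.injective
  apply lp.ext
  funext i
  rw [ξ.repr_apply_apply, ξ.repr_apply_apply, h]

lemma pow_apply_eig {T : H →L[ℂ] H} {v : H} {z : ℂ} (h : T v = z • v) (n : ℕ) :
    (T ^ n) v = z ^ n • v := by
  induction n with
  | zero => simp
  | succ n ih =>
    rw [pow_succ, ContinuousLinearMap.mul_apply, h, map_smul, ih, smul_smul, pow_succ,
      mul_comm]

lemma aeval_apply_eig {T : H →L[ℂ] H} {v : H} {z : ℂ} (h : T v = z • v) (p : Polynomial ℂ) :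
    (Polynomial.aeval T p) v = (p.eval z) • v := by
  induction p using Polynomial.induction_on' with
  | add p q hp hq => simp [hp, hq, add_smul]
  | monomial n a =>
    simp only [Polynomial.aeval_monomial, Polynomial.eval_monomial,
      ContinuousLinearMap.mul_apply, pow_apply_eig h n]
    simp [Algebra.algebraMap_eq_smul_one, smul_smul, mul_comm]

end Aux

/-- Haagerup's lemma: for the unilateral shift `s` (given by a Hilbert basis
`ξ` of `H` with `s ξⱼ = ξ_{j+1}`) and a polynomial `u` with `u 0 ≠ 0`, the
moment generating series `ψ_x(z) = ∑_{n ≥ 1} ⟨ξ₀, xⁿ ξ₀⟩ zⁿ` of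
`x = (1+s) u(s*)` satisfies `ψ_x(z/((1+z)u(z))) = z` for small `z`. -/
theorem stmt4 {H : Type*} [NormedAddCommGroup H] [InnerProductSpace ℂ H]
    [CompleteSpace H] (ξ : HilbertBasis ℕ ℂ H) (s : H →L[ℂ] H)
    (hs : ∀ j : ℕ, s (ξ j) = ξ (j + 1))
    (u : Polynomial ℂ) (hu : Polynomial.eval 0 u ≠ 0)
    (x : H →L[ℂ] H)
    (hx : x = (1 + s) * Polynomial.aeval (ContinuousLinearMap.adjoint s) u) :
    ∃ ε > 0, ∀ z : ℂ, ‖z‖ < ε →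
      (∑' n : ℕ, ⟪ξ 0, (x ^ (n + 1)) (ξ 0)⟫_ℂ *
          (z / ((1 + z) * Polynomial.eval z u)) ^ (n + 1)) = z := by
  have hxpos : (0:ℝ) < (‖x‖ + 1)⁻¹ := by positivity
  -- eventually conditions
  have h1 : ∀ᶠ z : ℂ in nhds 0, ‖z‖ < 1 := by
    filter_upwards [Metric.ball_mem_nhds (0:ℂ) one_pos] with z hz
    simpa [mem_ball_zero_iff] using hz
  have h2 : ∀ᶠ z : ℂ in nhds 0, Polynomial.eval z u ≠ 0 :=
    (u.continuous.continuousAt).eventually_ne hu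
  have h3 : ∀ᶠ z : ℂ in nhds 0, (1 + z) ≠ 0 :=
    ((continuous_const.add continuous_id).continuousAt).eventually_ne (by norm_num)
  have h4 : Filter.Tendsto (fun z : ℂ => z / ((1 + z) * Polynomial.eval z u))
      (nhds 0) (nhds 0) := by
    have : ContinuousAt (fun z : ℂ => z / ((1 + z) * Polynomial.eval z u)) 0 :=
      continuousAt_id.div
        (((continuous_const.add continuous_id).mul u.continuous).continuousAt)
        (by simpa using hu)
    simpa [hu] using this.tendsto
  have hball : ∀ᶠ w : ℂ in nhds 0, ‖w‖ < (‖x‖ + 1)⁻¹ := by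
    filter_upwards [Metric.ball_mem_nhds (0:ℂ) hxpos] with w hw
    simpa [mem_ball_zero_iff] using hw
  have hP := h1.and (h2.and (h3.and (h4.eventually hball)))
  rw [Metric.eventually_nhds_iff] at hP
  obtain ⟨ε, hε, hPε⟩ := hP
  refine ⟨ε, hε, fun z hz => ?_⟩
  obtain ⟨hz1, hu0, h1z, hw⟩ := hPε (by simpa using hz)
  set w : ℂ := z / ((1 + z) * Polynomial.eval z u) with hwdef
  -- the eigenvector
  set v : H := ∑' j : ℕ, z ^ j • ξ j with hvdef
  have hnorm : ∀ j : ℕ, ‖z ^ j • ξ j‖ = ‖z‖ ^ j := by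
    intro j
    rw [norm_smul, norm_pow, ξ.orthonormal.1 j, mul_one]
  have hsum : Summable fun j : ℕ => z ^ j • ξ j := by
    apply Summable.of_norm
    simpa [hnorm] using summable_geometric_of_lt_one (norm_nonneg z) hz1
  have hinner : ∀ i : ℕ, ⟪ξ i, v⟫_ℂ = z ^ i := by
    intro i
    rw [hvdef, ← innerSL_apply_apply ℂ, (innerSL ℂ (ξ i)).map_tsum hsum]
    have : ∀ j : ℕ, (innerSL ℂ (ξ i)) (z ^ j • ξ j) = if i = j then z ^ j else 0 := by
      intro j
      rw [innerSL_apply_apply, inner_smul_right, orthonormal_iff_ite.mp ξ.orthonormal]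
      split <;> simp
    rw [tsum_congr this, tsum_eq_single i (by intro j hj; simp [Ne.symm hj])]
    simp
  -- s v
  have hsv : z • s v = v - ξ 0 := by
    have h1' : s v = ∑' j : ℕ, z ^ j • ξ (j + 1) := by
      rw [hvdef, s.map_tsum hsum]
      simp [hs]
    have h2' : z • s v = ∑' j : ℕ, z ^ (j + 1) • ξ (j + 1) := by
      rw [h1', ← tsum_const_smul'' z]
      congr 1; funext j; rw [smul_smul, pow_succ, mul_comm]
    have h3' : v = ξ 0 + ∑' j : ℕ, z ^ (j + 1) • ξ (j + 1) := by
      simpa using hsum.tsum_eq_zero_add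
    rw [h2', h3']; abel
  -- adjoint eigenvector
  have hadj : (ContinuousLinearMap.adjoint s) v = z • v := by
    apply hb_ext ξ
    intro i
    rw [ContinuousLinearMap.adjoint_inner_right, hs, hinner, inner_smul_right, hinner,
      pow_succ, mul_comm]
  -- x applied to v
  have hxv : x v = Polynomial.eval z u • (v + s v) := by
    rw [hx, ContinuousLinearMap.mul_apply, aeval_apply_eig hadj, map_smul]
    simp [ContinuousLinearMap.add_apply]
  -- key identity
  have hkey : (1 - w • x) ((1 + z) • v) = ξ 0 := by
    have hw1z : w * (1 + z) = z / Polynomial.eval z u := by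
      rw [hwdef, div_mul_eq_mul_div, div_eq_div_iff (mul_ne_zero h1z hu0) hu0]
      ring
    have : (w • x) ((1 + z) • v) = z • v + (v - ξ 0) := by
      rw [ContinuousLinearMap.smul_apply, map_smul, smul_smul, hw1z, hxv, smul_smul,
        div_mul_cancel₀ _ hu0, smul_add, hsv]
    rw [ContinuousLinearMap.sub_apply, this, ContinuousLinearMap.one_apply, add_smul,
      one_smul]
    abel
  -- geometric series
  have hy : ‖w • x‖ < 1 := by
    rw [norm_smul]
    calc ‖w‖ * ‖x‖ ≤ ‖w‖ * (‖x‖ + 1) := by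
          apply mul_le_mul_of_nonneg_left (by linarith) (norm_nonneg w)
      _ < (‖x‖ + 1)⁻¹ * (‖x‖ + 1) := by
          apply mul_lt_mul_of_pos_right hw (by positivity)
      _ = 1 := inv_mul_cancel₀ (by positivity)
  set y : H →L[ℂ] H := w • x with hydef
  have hgeom : Summable fun n : ℕ => y ^ n := summable_geometric_of_norm_lt_one hy
  have hSxi : (∑' n : ℕ, y ^ n) (ξ 0) = (1 + z) • v := by
    conv_lhs => rw [← hkey]
    rw [← ContinuousLinearMap.mul_apply, geom_series_mul_neg y hy,
      ContinuousLinearMap.one_apply]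
  have hgeom' : Summable fun n : ℕ => y ^ (n + 1) :=
    hgeom.comp_injective (add_left_injective 1)
  have happ : Summable fun n : ℕ => (y ^ (n + 1)) (ξ 0) := by
    have := hgeom'.map (ContinuousLinearMap.apply ℂ H (ξ 0))
      (ContinuousLinearMap.apply ℂ H (ξ 0)).continuous
    simpa only [Function.comp_def, ContinuousLinearMap.apply_apply] using this
  have hterm : ∀ n : ℕ, ⟪ξ 0, (x ^ (n + 1)) (ξ 0)⟫_ℂ * w ^ (n + 1)
      = ⟪ξ 0, (y ^ (n + 1)) (ξ 0)⟫_ℂ := by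
    intro n
    rw [hydef, smul_pow, ContinuousLinearMap.smul_apply, inner_smul_right, mul_comm]
  calc (∑' n : ℕ, ⟪ξ 0, (x ^ (n + 1)) (ξ 0)⟫_ℂ * w ^ (n + 1))
      = ∑' n : ℕ, ⟪ξ 0, (y ^ (n + 1)) (ξ 0)⟫_ℂ := tsum_congr hterm
    _ = ⟪ξ 0, ∑' n : ℕ, (y ^ (n + 1)) (ξ 0)⟫_ℂ :=
        ((innerSL ℂ (ξ 0)).map_tsum happ).symm
    _ = z := by
        have : (∑' n : ℕ, (y ^ (n + 1)) (ξ 0)) = (1 + z) • v - ξ 0 := by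
          have h := (ContinuousLinearMap.apply ℂ H (ξ 0)).map_tsum hgeom'
          simp only [ContinuousLinearMap.apply_apply] at h
          rw [← h, geom_series_succ y hy, ContinuousLinearMap.sub_apply, hSxi,
            ContinuousLinearMap.one_apply]
        rw [this, inner_sub_right, inner_smul_right, hinner 0,
          orthonormal_iff_ite.mp ξ.orthonormal 0 0]
        simp
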